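/- Let ρ be a self-adjoint complex matrix indexed by (Fin m × Fin n), and let a ∈ ℂ^m, b ∈ ℂ^n be unit vectors. For the product vector a⊗b ∈ ℂ^{m·n} with components (a⊗b)_{(i,k)} = a_i b_k, define the reduced matrices ρ_b ∈ M_m(ℂ) by (ρ_b)_{ij} = Σ_{k,l} conj(b_k) ρ_{(i,k),(j,l)} b_l and ρ_a ∈ M_n(ℂ) by (ρ_a)_{kl} = Σ_{i,j} conj(a_i) ρ_{(i,k),(j,l)} a_j. Consider the real-valued function F(x, y) = ⟨x⊗y, ρ(x⊗y)⟩ / (⟨x,x⟩⟨y,y⟩) on pairs of nonzero vectors, with ℂ^m × ℂ^n regarded as a real normed space. Then the (real) Fréchet derivative of F at (a, b) is zero if and only if ρ_b a = g·a and ρ_a b = g·b, where g = ⟨a⊗b, ρ(a⊗b)⟩. -/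

import Mathlib

open scoped ComplexConjugate

private lemma aux_norm {k : ℕ} (x : EuclideanSpace ℂ (Fin k)) :
    (∑ i, conj (x i) * x i).re = ‖x‖ ^ 2 := by
  have h := @inner_self_eq_norm_sq ℂ _ _ _ _ x
  rw [← h, PiLp.inner_apply]
  simp [RCLike.inner_apply]
  refine Finset.sum_congr rfl fun i _ => ?_
  rw [← Complex.ofReal_pow, Complex.ofReal_re, Complex.sq_norm, Complex.normSq_apply]

private lemma aux_conj_bilin {ι : Type*} [Fintype ι] (ρ : Matrix ι ι ℂ)
    (hρ : ρ.IsHermitian) (Y Z : ι → ℂ) :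
    conj (∑ p, ∑ q, conj (Y p) * ρ p q * Z q) = ∑ p, ∑ q, conj (Z p) * ρ p q * Y q := by
  rw [map_sum, Finset.sum_comm]
  refine Finset.sum_congr rfl fun q _ => ?_
  rw [map_sum]
  refine Finset.sum_congr rfl fun p _ => ?_
  simp only [map_mul, RingHomCompTriple.comp_apply, RingHom.id_apply]
  have h : conj (ρ q p) = ρ p q := by rw [starRingEnd_apply]; exact hρ.apply p q
  rw [h]
  ring

private lemma aux_A1 {m n : ℕ} (ρ : Matrix (Fin m × Fin n) (Fin m × Fin n) ℂ)
    (a c : EuclideanSpace ℂ (Fin m)) (b : EuclideanSpace ℂ (Fin n))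
    (ρb : Matrix (Fin m) (Fin m) ℂ)
    (hρb : ∀ i j, ρb i j = ∑ k, ∑ l, conj (b k) * ρ (i, k) (j, l) * b l) :
    ∑ p : Fin m × Fin n, ∑ q : Fin m × Fin n,
      conj (c p.1 * b p.2) * ρ p q * (a q.1 * b q.2)
      = ∑ i, conj (c i) * ρb.mulVec a i := by
  simp only [Fintype.sum_prod_type, Matrix.mulVec, dotProduct, hρb,
    Finset.mul_sum, Finset.sum_mul, map_mul]
  refine Finset.sum_congr rfl fun i _ => ?_
  conv_lhs => rw [Finset.sum_comm]
  refine Finset.sum_congr rfl fun j _ => ?_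
  refine Finset.sum_congr rfl fun k _ => ?_
  refine Finset.sum_congr rfl fun l _ => ?_
  ring

private lemma aux_A2 {m n : ℕ} (ρ : Matrix (Fin m × Fin n) (Fin m × Fin n) ℂ)
    (a : EuclideanSpace ℂ (Fin m)) (b w : EuclideanSpace ℂ (Fin n))
    (ρa : Matrix (Fin n) (Fin n) ℂ)
    (hρa : ∀ k l, ρa k l = ∑ i, ∑ j, conj (a i) * ρ (i, k) (j, l) * a j) :
    ∑ p : Fin m × Fin n, ∑ q : Fin m × Fin n,
      conj (a p.1 * w p.2) * ρ p q * (a q.1 * b q.2)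
      = ∑ k, conj (w k) * ρa.mulVec b k := by
  simp only [Fintype.sum_prod_type, Matrix.mulVec, dotProduct, hρa,
    Finset.mul_sum, Finset.sum_mul, map_mul]
  conv_lhs => rw [Finset.sum_comm]
  refine Finset.sum_congr rfl fun k _ => ?_
  conv_rhs => rw [Finset.sum_comm]
  refine Finset.sum_congr rfl fun i _ => ?_
  conv_lhs => rw [Finset.sum_comm]
  refine Finset.sum_congr rfl fun l _ => ?_
  refine Finset.sum_congr rfl fun j _ => ?_
  ring

private lemma aux_num_deriv {m n : ℕ} (ρ : Matrix (Fin m × Fin n) (Fin m × Fin n) ℂ)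
    (a u : EuclideanSpace ℂ (Fin m)) (b v : EuclideanSpace ℂ (Fin n)) :
    HasDerivAt (fun t : ℝ =>
      ∑ p, ∑ q, conj ((a p.1 + t • u p.1) * (b p.2 + t • v p.2)) * ρ p q *
        ((a q.1 + t • u q.1) * (b q.2 + t • v q.2)))
      (∑ p, ∑ q,
        (conj (u p.1 * b p.2 + a p.1 * v p.2) * ρ p q * (a q.1 * b q.2)
         + conj (a p.1 * b p.2) * ρ p q * (u q.1 * b q.2 + a q.1 * v q.2))) 0 := by
  have hx : ∀ i, HasDerivAt (fun t : ℝ => a i + t • u i) (u i) 0 := fun i => by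
    simpa using ((hasDerivAt_id (0:ℝ)).smul_const (u i)).const_add (a i)
  have hy : ∀ k, HasDerivAt (fun t : ℝ => b k + t • v k) (v k) 0 := fun k => by
    simpa using ((hasDerivAt_id (0:ℝ)).smul_const (v k)).const_add (b k)
  have hX : ∀ p : Fin m × Fin n, HasDerivAt
      (fun t : ℝ => (a p.1 + t • u p.1) * (b p.2 + t • v p.2))
      (u p.1 * b p.2 + a p.1 * v p.2) 0 := fun p => by
    simpa using (hx p.1).fun_mul (hy p.2)
  apply HasDerivAt.fun_sum; intro p _
  apply HasDerivAt.fun_sum; intro q _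
  have h1 := ((hX p).star.mul_const (ρ p q)).fun_mul (hX q)
  simp only [zero_smul, add_zero] at h1
  exact h1

private lemma aux_d_deriv {k : ℕ} (a u : EuclideanSpace ℂ (Fin k)) :
    HasDerivAt (fun t : ℝ => (∑ i, conj (a i + t • u i) * (a i + t • u i)).re)
      ((∑ i, (conj (u i) * a i + conj (a i) * u i)).re) 0 := by
  have hx : ∀ i, HasDerivAt (fun t : ℝ => a i + t • u i) (u i) 0 := fun i => by
    simpa using ((hasDerivAt_id (0:ℝ)).smul_const (u i)).const_add (a i)
  have hs : HasDerivAt (fun t : ℝ => ∑ i, conj (a i + t • u i) * (a i + t • u i))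
      (∑ i, (conj (u i) * a i + conj (a i) * u i)) 0 := by
    apply HasDerivAt.fun_sum; intro i _
    have h1 := (hx i).star.fun_mul (hx i)
    simp only [zero_smul, add_zero] at h1
    exact h1
  exact Complex.reCLM.hasFDerivAt.comp_hasDerivAt 0 hs


private lemma aux_single {k : ℕ} (i : Fin k) (c : ℂ) (x : Fin k → ℂ) :
    (∑ j, conj ((EuclideanSpace.single i c : EuclideanSpace ℂ (Fin k)) j) * x j)
      = conj c * x i := by
  simp [EuclideanSpace.single_apply, apply_ite, ite_mul]

private lemma aux_zero {k : ℕ} (x : Fin k → ℂ) :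
    (∑ j, conj ((0 : EuclideanSpace ℂ (Fin k)) j) * x j) = 0 := by
  simp

set_option maxHeartbeats 1600000 in
theorem separability_eigenvalue_equations
    {m n : ℕ}
    (ρ : Matrix (Fin m × Fin n) (Fin m × Fin n) ℂ) (hρ : ρ.IsHermitian)
    (a : EuclideanSpace ℂ (Fin m)) (b : EuclideanSpace ℂ (Fin n))
    (ha : ‖a‖ = 1) (hb : ‖b‖ = 1)
    (T : EuclideanSpace ℂ (Fin m) → EuclideanSpace ℂ (Fin n) →
        (Fin m × Fin n → ℂ))
    (hT : ∀ x y p, T x y p = x p.1 * y p.2)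
    (ρb : Matrix (Fin m) (Fin m) ℂ)
    (hρb : ∀ i j, ρb i j = ∑ k, ∑ l, conj (b k) * ρ (i, k) (j, l) * b l)
    (ρa : Matrix (Fin n) (Fin n) ℂ)
    (hρa : ∀ k l, ρa k l = ∑ i, ∑ j, conj (a i) * ρ (i, k) (j, l) * a j)
    (g : ℂ) (hg : g = ∑ p, ∑ q, conj (T a b p) * ρ p q * T a b q)
    (F : EuclideanSpace ℂ (Fin m) × EuclideanSpace ℂ (Fin n) → ℝ)
    (hF : ∀ x y, F (x, y) =
      (∑ p, ∑ q, conj (T x y p) * ρ p q * T x y q).re / (‖x‖ ^ 2 * ‖y‖ ^ 2)) :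
    fderiv ℝ F (a, b) = 0 ↔
      (ρb.mulVec a = g • a ∧ ρa.mulVec b = g • b) := by
  classical
  have ha2 : (∑ i, conj (a i) * a i).re = 1 := by rw [aux_norm, ha]; norm_num
  have hb2 : (∑ j, conj (b j) * b j).re = 1 := by rw [aux_norm, hb]; norm_num
  -- rewrite F in coordinates
  have hFeq : F = fun z : EuclideanSpace ℂ (Fin m) × EuclideanSpace ℂ (Fin n) =>
      (∑ p, ∑ q, conj (z.1 p.1 * z.2 p.2) * ρ p q * (z.1 q.1 * z.2 q.2)).re /
      ((∑ i, conj (z.1 i) * z.1 i).re * (∑ j, conj (z.2 j) * z.2 j).re) := by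
    funext z
    rw [← Prod.mk.eta (p := z), hF]
    simp only [hT, aux_norm]
  rw [hFeq]
  -- the value of g in coordinates, and its reality
  have hgc : g = ∑ p : Fin m × Fin n, ∑ q : Fin m × Fin n,
      conj (a p.1 * b p.2) * ρ p q * (a q.1 * b q.2) := by
    rw [hg]; simp only [hT]
  have hgreal : conj g = g := by
    rw [hgc]; exact aux_conj_bilin ρ hρ _ _
  have him : g.im = 0 := by
    have := congrArg Complex.im hgreal
    simp only [Complex.conj_im] at this
    linarith
  -- differentiability
  have hden0 : (∑ i, conj (a i) * a i).re * (∑ j, conj (b j) * b j).re ≠ 0 := by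
    rw [ha2, hb2]; norm_num
  have hc1 : ∀ i, DifferentiableAt ℝ
      (fun z : EuclideanSpace ℂ (Fin m) × EuclideanSpace ℂ (Fin n) => z.1 i) (a, b) := by
    intro i
    exact ((((EuclideanSpace.proj i : EuclideanSpace ℂ (Fin m) →L[ℂ] ℂ)).restrictScalars ℝ).comp
      (ContinuousLinearMap.fst ℝ (EuclideanSpace ℂ (Fin m)) (EuclideanSpace ℂ (Fin n)))).differentiableAt
  have hc2 : ∀ j, DifferentiableAt ℝ
      (fun z : EuclideanSpace ℂ (Fin m) × EuclideanSpace ℂ (Fin n) => z.2 j) (a, b) := by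
    intro j
    exact ((((EuclideanSpace.proj j : EuclideanSpace ℂ (Fin n) →L[ℂ] ℂ)).restrictScalars ℝ).comp
      (ContinuousLinearMap.snd ℝ (EuclideanSpace ℂ (Fin m)) (EuclideanSpace ℂ (Fin n)))).differentiableAt
  have hre : ∀ (f : EuclideanSpace ℂ (Fin m) × EuclideanSpace ℂ (Fin n) → ℂ),
      DifferentiableAt ℝ f (a, b) → DifferentiableAt ℝ (fun z => (f z).re) (a, b) := by
    intro f hf
    exact (Complex.reCLM.differentiableAt).comp _ hf
  have hdiff : DifferentiableAt ℝ
      (fun z : EuclideanSpace ℂ (Fin m) × EuclideanSpace ℂ (Fin n) =>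
        (∑ p, ∑ q, conj (z.1 p.1 * z.2 p.2) * ρ p q * (z.1 q.1 * z.2 q.2)).re /
        ((∑ i, conj (z.1 i) * z.1 i).re * (∑ j, conj (z.2 j) * z.2 j).re)) (a, b) := by
    have hnum : DifferentiableAt ℝ (fun z : EuclideanSpace ℂ (Fin m) × EuclideanSpace ℂ (Fin n) =>
        ∑ p, ∑ q, conj (z.1 p.1 * z.2 p.2) * ρ p q * (z.1 q.1 * z.2 q.2)) (a, b) := by
      apply DifferentiableAt.fun_sum; intro p _
      apply DifferentiableAt.fun_sum; intro q _
      exact ((((hc1 p.1).fun_mul (hc2 p.2)).star.mul_const (ρ p q)).fun_mul ((hc1 q.1).fun_mul (hc2 q.2)))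
    have hd1 : DifferentiableAt ℝ (fun z : EuclideanSpace ℂ (Fin m) × EuclideanSpace ℂ (Fin n) =>
        ∑ i, conj (z.1 i) * z.1 i) (a, b) :=
      DifferentiableAt.fun_sum fun i _ => ((hc1 i).star.fun_mul (hc1 i))
    have hd2 : DifferentiableAt ℝ (fun z : EuclideanSpace ℂ (Fin m) × EuclideanSpace ℂ (Fin n) =>
        ∑ j, conj (z.2 j) * z.2 j) (a, b) :=
      DifferentiableAt.fun_sum fun j _ => ((hc2 j).star.fun_mul (hc2 j))
    have hd : DifferentiableAt ℝ (fun z : EuclideanSpace ℂ (Fin m) × EuclideanSpace ℂ (Fin n) =>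
        (∑ i, conj (z.1 i) * z.1 i).re * (∑ j, conj (z.2 j) * z.2 j).re) (a, b) :=
      DifferentiableAt.fun_mul (hre _ hd1) (hre _ hd2)
    have hfin := (hre _ hnum).fun_mul (hd.fun_inv hden0)
    simpa [div_eq_mul_inv] using hfin
  -- key directional derivative formula
  have key : ∀ (u : EuclideanSpace ℂ (Fin m)) (v : EuclideanSpace ℂ (Fin n)),
      fderiv ℝ (fun z : EuclideanSpace ℂ (Fin m) × EuclideanSpace ℂ (Fin n) =>
        (∑ p, ∑ q, conj (z.1 p.1 * z.2 p.2) * ρ p q * (z.1 q.1 * z.2 q.2)).re /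
        ((∑ i, conj (z.1 i) * z.1 i).re * (∑ j, conj (z.2 j) * z.2 j).re)) (a, b) (u, v) =
      2 * (((∑ i, conj (u i) * ρb.mulVec a i) + (∑ k, conj (v k) * ρa.mulVec b k))
           - g * ((∑ i, conj (u i) * a i) + (∑ k, conj (v k) * b k))).re := by
    intro u v
    -- chain rule along the segment
    have h1 : HasDerivAt (fun t : ℝ => a + t • u) u 0 := by
      simpa using ((hasDerivAt_id (0:ℝ)).smul_const u).const_add a
    have h2 : HasDerivAt (fun t : ℝ => b + t • v) v 0 := by
      simpa using ((hasDerivAt_id (0:ℝ)).smul_const v).const_add b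
    have hcurve : HasDerivAt (fun t : ℝ => ((a + t • u, b + t • v) :
        EuclideanSpace ℂ (Fin m) × EuclideanSpace ℂ (Fin n))) (u, v) 0 := h1.prodMk h2
    have hchain := (hdiff.hasFDerivAt.comp_hasDerivAt_of_eq 0 hcurve (by simp))
    -- explicit derivative
    have hN := aux_num_deriv ρ a u b v
    have hNre := Complex.reCLM.hasFDerivAt.comp_hasDerivAt 0 hN
    have hD1 := aux_d_deriv a u
    have hD2 := aux_d_deriv b v
    have hne : ((fun t : ℝ => (∑ i, conj (a i + t • u i) * (a i + t • u i)).re) 0 *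
        (fun t : ℝ => (∑ k, conj (b k + t • v k) * (b k + t • v k)).re) 0) ≠ 0 := by
      simp only [zero_smul, add_zero]
      rw [ha2, hb2]; norm_num
    have hdiv := hNre.div (hD1.fun_mul hD2) hne
    simp only [Function.comp_apply, zero_smul, add_zero, Complex.reCLM_apply] at hdiv
    rw [ha2, hb2] at hdiv
    -- identify the two hasDerivAt values
    have hfun : HasDerivAt (fun t : ℝ =>
        (∑ p, ∑ q, conj ((a + t • u) p.1 * (b + t • v) p.2) * ρ p q *
          ((a + t • u) q.1 * (b + t • v) q.2)).re /
        ((∑ i, conj ((a + t • u) i) * (a + t • u) i).re *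
         (∑ k, conj ((b + t • v) k) * (b + t • v) k).re)) _ 0 := hdiv
    have := hchain.unique hfun
    rw [this]
    -- now compute the raw value
    have hsplitA : (∑ p : Fin m × Fin n, ∑ q : Fin m × Fin n,
        conj (u p.1 * b p.2 + a p.1 * v p.2) * ρ p q * (a q.1 * b q.2)) =
        (∑ i, conj (u i) * ρb.mulVec a i) + (∑ k, conj (v k) * ρa.mulVec b k) := by
      have : ∀ p q : Fin m × Fin n,
          conj (u p.1 * b p.2 + a p.1 * v p.2) * ρ p q * (a q.1 * b q.2)
          = conj (u p.1 * b p.2) * ρ p q * (a q.1 * b q.2)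
            + conj (a p.1 * v p.2) * ρ p q * (a q.1 * b q.2) := by
        intro p q; simp only [map_add]; ring
      simp only [this, Finset.sum_add_distrib]
      rw [aux_A1 ρ a u b ρb hρb, aux_A2 ρ a b v ρa hρa]
    have hconj : conj (∑ p : Fin m × Fin n, ∑ q : Fin m × Fin n,
        conj (u p.1 * b p.2 + a p.1 * v p.2) * ρ p q * (a q.1 * b q.2)) =
        ∑ p : Fin m × Fin n, ∑ q : Fin m × Fin n,
          conj (a p.1 * b p.2) * ρ p q * (u q.1 * b q.2 + a q.1 * v q.2) :=
      aux_conj_bilin ρ hρ _ _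
    have hsplitB : (∑ p : Fin m × Fin n, ∑ q : Fin m × Fin n,
        conj (a p.1 * b p.2) * ρ p q * (u q.1 * b q.2 + a q.1 * v q.2)) =
        conj ((∑ i, conj (u i) * ρb.mulVec a i) + (∑ k, conj (v k) * ρa.mulVec b k)) := by
      rw [← hconj, hsplitA]
    have hDN : (∑ p : Fin m × Fin n, ∑ q : Fin m × Fin n,
        (conj (u p.1 * b p.2 + a p.1 * v p.2) * ρ p q * (a q.1 * b q.2)
         + conj (a p.1 * b p.2) * ρ p q * (u q.1 * b q.2 + a q.1 * v q.2))) =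
        ((∑ i, conj (u i) * ρb.mulVec a i) + (∑ k, conj (v k) * ρa.mulVec b k))
        + conj ((∑ i, conj (u i) * ρb.mulVec a i) + (∑ k, conj (v k) * ρa.mulVec b k)) := by
      simp only [Finset.sum_add_distrib]
      rw [hsplitA, hsplitB]
    have hd1eq : (∑ i, (conj (u i) * a i + conj (a i) * u i)) =
        (∑ i, conj (u i) * a i) + conj (∑ i, conj (u i) * a i) := by
      rw [Finset.sum_add_distrib, map_sum]
      congr 1
      refine Finset.sum_congr rfl fun i _ => ?_
      rw [map_mul, Complex.conj_conj]
      ring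
    have hd2eq : (∑ k, (conj (v k) * b k + conj (b k) * v k)) =
        (∑ k, conj (v k) * b k) + conj (∑ k, conj (v k) * b k) := by
      rw [Finset.sum_add_distrib, map_sum]
      congr 1
      refine Finset.sum_congr rfl fun k _ => ?_
      rw [map_mul, Complex.conj_conj]
      ring
    simp only [hDN, hd1eq, hd2eq, ← hgc]
    simp only [Complex.add_re, Complex.sub_re, Complex.mul_re, Complex.conj_re,
      Complex.conj_im, him]
    ring
  constructor
  · intro h0
    have hzero : ∀ (u : EuclideanSpace ℂ (Fin m)) (v : EuclideanSpace ℂ (Fin n)),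
        (((∑ i, conj (u i) * ρb.mulVec a i) + (∑ k, conj (v k) * ρa.mulVec b k))
          - g * ((∑ i, conj (u i) * a i) + (∑ k, conj (v k) * b k))).re = 0 := by
      intro u v
      have h := key u v
      rw [h0] at h
      simp only [ContinuousLinearMap.zero_apply] at h
      linarith [h]
    constructor
    · funext i
      have e1 := hzero (EuclideanSpace.single i 1) 0
      have e2 := hzero (EuclideanSpace.single i Complex.I) 0
      rw [aux_single, aux_single, aux_zero, aux_zero] at e1 e2
      simp only [map_one, one_mul, add_zero] at e1 e2
      have hz : ρb.mulVec a i - g * a i = 0 := by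
        apply Complex.ext
        · simpa [Complex.sub_re] using e1
        · have : conj Complex.I * ρb.mulVec a i - g * (conj Complex.I * a i)
              = conj Complex.I * (ρb.mulVec a i - g * a i) := by ring
          rw [this] at e2
          simpa [Complex.mul_re] using e2
      have : ρb.mulVec a i = g * a i := by linear_combination hz
      rw [this]
      simp [PiLp.smul_apply, smul_eq_mul]
    · funext k
      have e1 := hzero 0 (EuclideanSpace.single k 1)
      have e2 := hzero 0 (EuclideanSpace.single k Complex.I)
      rw [aux_single, aux_single, aux_zero, aux_zero] at e1 e2
      simp only [map_one, one_mul, zero_add] at e1 e2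
      have hz : ρa.mulVec b k - g * b k = 0 := by
        apply Complex.ext
        · simpa [Complex.sub_re] using e1
        · have : conj Complex.I * ρa.mulVec b k - g * (conj Complex.I * b k)
              = conj Complex.I * (ρa.mulVec b k - g * b k) := by ring
          rw [this] at e2
          simpa [Complex.mul_re] using e2
      have : ρa.mulVec b k = g * b k := by linear_combination hz
      rw [this]
      simp [PiLp.smul_apply, smul_eq_mul]
  · rintro ⟨h1, h2⟩
    refine ContinuousLinearMap.ext fun w => ?_
    have h := key w.1 w.2
    rw [Prod.mk.eta] at h
    rw [h]
    have e1 : ∀ i, conj (w.1 i) * (g * a i) = g * (conj (w.1 i) * a i) := fun i => by ring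
    have e2 : ∀ k, conj (w.2 k) * (g * b k) = g * (conj (w.2 k) * b k) := fun k => by ring
    have hval : ((∑ i, conj (w.1 i) * ρb.mulVec a i) + (∑ k, conj (w.2 k) * ρa.mulVec b k))
        - g * ((∑ i, conj (w.1 i) * a i) + (∑ k, conj (w.2 k) * b k)) = 0 := by
      rw [h1, h2]
      simp only [PiLp.smul_apply, WithLp.ofLp_smul, Pi.smul_apply, smul_eq_mul, e1, e2, ← Finset.mul_sum]
      ring
    rw [hval]
    simp
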